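/- Let α ∈ (0,1) and K(t) = exp(Σ_{n=1}^∞ max(α/n − |t|, 0)) for 0 < |t| ≤ 1/2. Then there exist constants c, C > 0 such that c·|t|^{−α} ≤ K(t) ≤ C·|t|^{−α} for all 0 < |t| ≤ 1/2. -/

import Mathlib

open MeasureTheory

theorem stmt_8 (α : ℝ) (hα : α ∈ Set.Ioo (0:ℝ) 1)
    (K : ℝ → ℝ)
    (hK : ∀ t : ℝ, 0 < |t| → |t| ≤ 1/2 →
      K t = Real.exp (∑' n : ℕ, max (α / (n + 1) - |t|) 0)) :
    ∃ c C : ℝ, 0 < c ∧ 0 < C ∧ ∀ t : ℝ, 0 < |t| → |t| ≤ 1/2 →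
      c * |t| ^ (-α) ≤ K t ∧ K t ≤ C * |t| ^ (-α) := by
  obtain ⟨hα0, hα1⟩ := hα
  refine ⟨Real.exp (-2), Real.exp 1, Real.exp_pos _, Real.exp_pos _, ?_⟩
  intro t ht hle
  set s := |t| with hs
  have hs0 : 0 < s := ht
  have hs1 : s ≤ 1 := hle.trans (by norm_num)
  have hlogs : Real.log s ≤ 0 := Real.log_nonpos hs0.le hs1
  have hKt := hK t ht hle
  set N := ⌊α / s⌋₊ with hN
  have hsum : (∑' n : ℕ, max (α / (↑n + 1) - s) 0)
      = ∑ n ∈ Finset.range N, max (α / (↑n + 1) - s) 0 := by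
    refine tsum_eq_sum ?_
    intro n hn
    have hNn : N ≤ n := by simpa using hn
    have h1 : α / s < (n : ℝ) + 1 := by
      calc α / s < (N : ℝ) + 1 := Nat.lt_floor_add_one _
        _ ≤ (n : ℝ) + 1 := by exact_mod_cast add_le_add_left (Nat.cast_le.mpr hNn) 1
    have hn1 : (0:ℝ) < (n : ℝ) + 1 := by positivity
    have : α / ((n:ℝ) + 1) < s := by
      rw [div_lt_iff₀ hn1]
      calc α = (α / s) * s := by field_simp
        _ < ((n:ℝ) + 1) * s := by exact mul_lt_mul_of_pos_right h1 hs0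
        _ = s * ((n:ℝ)+1) := by ring
    exact max_eq_right (by linarith)
  set S := ∑ n ∈ Finset.range N, max (α / (↑n + 1) - s) 0 with hSdef
  have hharm : (harmonic N : ℝ) = ∑ n ∈ Finset.range N, ((n:ℝ)+1)⁻¹ := by
    rw [harmonic]
    push_cast
    rfl
  -- lower bound
  have hNle : (N : ℝ) * s ≤ α := by
    have := Nat.floor_le (by positivity : (0:ℝ) ≤ α / s)
    calc (N : ℝ) * s ≤ (α / s) * s := mul_le_mul_of_nonneg_right this hs0.le
      _ = α := by field_simp
  have hlogα : α - 1 ≤ α * Real.log α := by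
    have h := Real.log_le_sub_one_of_pos (inv_pos.mpr hα0)
    rw [Real.log_inv] at h
    have h2 := mul_le_mul_of_nonneg_left h hα0.le
    have h3 : α * (α⁻¹ - 1) = 1 - α := by field_simp
    nlinarith
  have hlo : -2 - α * Real.log s ≤ S := by
    have h1 : ∑ n ∈ Finset.range N, (α / (↑n + 1) - s) ≤ S :=
      Finset.sum_le_sum fun n _ => le_max_left _ _
    have h2 : ∑ n ∈ Finset.range N, (α / (↑n + 1) - s)
        = α * (harmonic N : ℝ) - (N : ℝ) * s := by
      rw [Finset.sum_sub_distrib, hharm, Finset.mul_sum]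
      simp [div_eq_mul_inv]
    have h3 : Real.log (α / s) ≤ (harmonic N : ℝ) :=
      log_le_harmonic_floor _ (by positivity)
    have h4 : α * Real.log (α / s) ≤ α * (harmonic N : ℝ) :=
      mul_le_mul_of_nonneg_left h3 hα0.le
    rw [Real.log_div hα0.ne' hs0.ne'] at h4
    nlinarith
  -- upper bound
  have hup : S ≤ 1 - α * Real.log s := by
    by_cases hcase : 1 ≤ α / s
    · have h1 : S ≤ ∑ n ∈ Finset.range N, α / (↑n + 1) := by
        refine Finset.sum_le_sum fun n _ => max_le (by linarith) (by positivity)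
      have h2 : ∑ n ∈ Finset.range N, α / (↑n + 1) = α * (harmonic N : ℝ) := by
        rw [hharm, Finset.mul_sum]
        simp [div_eq_mul_inv]
      have h3 : (harmonic N : ℝ) ≤ 1 + Real.log (α / s) :=
        harmonic_floor_le_one_add_log _ hcase
      have h4 : α * (harmonic N : ℝ) ≤ α * (1 + Real.log (α / s)) :=
        mul_le_mul_of_nonneg_left h3 hα0.le
      rw [Real.log_div hα0.ne' hs0.ne'] at h4
      have h5 : α * Real.log α ≤ 0 :=
        mul_nonpos_of_nonneg_of_nonpos hα0.le (Real.log_nonpos hα0.le hα1.le)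
      nlinarith
    · have hN0 : N = 0 := Nat.floor_eq_zero.mpr (lt_of_not_ge hcase)
      have : S = 0 := by rw [hSdef, hN0]; simp
      rw [this]
      nlinarith
  -- conclude
  have hrpow : s ^ (-α) = Real.exp (-(α * Real.log s)) := by
    rw [Real.rpow_def_of_pos hs0]; ring_nf
  rw [hKt, hsum, hrpow]
  constructor
  · rw [← Real.exp_add]
    exact Real.exp_le_exp.mpr (by linarith)
  · rw [← Real.exp_add]
    exact Real.exp_le_exp.mpr (by linarith)
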